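/- arXiv:2202.02747 — 5 statements merged into one kernel-verified Lean document; each statement's English description precedes it below -/
import Mathlib

section
/- Let E ⊆ ℝ≥0 be a bounded closed set. Then λ(E) = Σ_{k=1}^{K_E} μ(Ẽ_k), where for each positive integer k, Ẽ_k = {x ∈ [0,1) : #{n ∈ ℕ : n + x ∈ E} ≥ k} and K_E = sup{k ∈ ℕ : Ẽ_k ≠ ∅}. -/
open MeasureTheory Set Pointwise

/-- `Ẽ_k = {x ∈ [0,1) : #{n ∈ ℕ : n + x ∈ E} ≥ k}`. -/
def tildeSet (E : Set ℝ) (k : ℕ) : Set ℝ :=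
  {x ∈ Set.Ico (0 : ℝ) 1 | k ≤ {n : ℕ | (n : ℝ) + x ∈ E}.ncard}

/-- `K_E = sup {k ∈ ℕ : Ẽ_k ≠ ∅}`. -/
noncomputable def KE (E : Set ℝ) : ℕ := sSup {k : ℕ | tildeSet E k ≠ ∅}

/-- For a bounded closed set `E ⊆ ℝ≥0`, `λ(E) = Σ_{k=1}^{K_E} μ(Ẽ_k)`. -/
theorem measure_eq_sum_tilde (E : Set ℝ) (hE : E ⊆ {x : ℝ | 0 ≤ x})
    (hEbd : Bornology.IsBounded E) (hEcl : IsClosed E) :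
    volume E = ∑ k ∈ Finset.Icc 1 (KE E), volume (tildeSet E k) := by
  classical
  have hEm : MeasurableSet E := hEcl.measurableSet
  obtain ⟨R, hR⟩ := hEbd.subset_closedBall 0
  set N : ℕ := ⌈R⌉₊ + 1 with hN
  have hlt : ∀ x ∈ E, x < N := by
    intro x hx
    have h := hR hx
    rw [Metric.mem_closedBall, Real.dist_eq, sub_zero] at h
    have h1 : x ≤ R := (abs_le.mp h).2
    have h2 : R ≤ (⌈R⌉₊ : ℝ) := Nat.le_ceil R
    have : (N : ℝ) = (⌈R⌉₊ : ℝ) + 1 := by push_cast [hN]; ring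
    rw [this]
    linarith
  set c : ℝ → ℕ := fun x => ∑ n ∈ Finset.range N, if (n : ℝ) + x ∈ E then 1 else 0 with hc
  have hnc : ∀ x ∈ Ico (0:ℝ) 1, {n : ℕ | (n : ℝ) + x ∈ E}.ncard = c x := by
    intro x hx
    have hset : {n : ℕ | (n : ℝ) + x ∈ E}
        = ((((Finset.range N).filter fun n => (n : ℝ) + x ∈ E) : Finset ℕ) : Set ℕ) := by
      ext n
      simp only [mem_setOf_eq, Finset.coe_filter, Finset.mem_range]
      refine ⟨fun h => ⟨?_, h⟩, fun h => h.2⟩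
      have h1 : (n : ℝ) < N := lt_of_le_of_lt (le_add_of_nonneg_right hx.1) (hlt _ h)
      exact_mod_cast h1
    rw [hset, Set.ncard_coe_finset, Finset.card_filter]
  have hcN : ∀ x, c x ≤ N := by
    intro x
    calc c x ≤ ∑ n ∈ Finset.range N, 1 :=
          Finset.sum_le_sum (fun i _ => by split <;> simp)
    _ = N := by simp
  have hcmeas : Measurable c := by
    apply Finset.measurable_sum
    intro n _
    exact Measurable.ite (hEm.preimage (measurable_const_add _)) measurable_const
      measurable_const
  have htil : ∀ k, tildeSet E k = Ico (0:ℝ) 1 ∩ {x | k ≤ c x} := by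
    intro k
    ext x
    simp only [tildeSet, mem_sep_iff, mem_inter_iff, mem_setOf_eq]
    constructor
    · rintro ⟨h1, h2⟩; exact ⟨h1, (hnc x h1) ▸ h2⟩
    · rintro ⟨h1, h2⟩; exact ⟨h1, (hnc x h1).symm ▸ h2⟩
  have htilm : ∀ k, MeasurableSet (tildeSet E k) := by
    intro k
    rw [htil]
    exact measurableSet_Ico.inter (hcmeas measurableSet_Ici)
  have hcK : ∀ x ∈ Ico (0:ℝ) 1, c x ≤ KE E := by
    intro x hx
    rcases Nat.eq_zero_or_pos (c x) with h | h
    · omega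
    · apply le_csSup
      · refine ⟨N, fun k hk => ?_⟩
        obtain ⟨y, hy⟩ := nonempty_iff_ne_empty.mpr hk
        rw [htil] at hy
        exact le_trans hy.2 (hcN y)
      · rw [mem_setOf_eq, ← nonempty_iff_ne_empty]
        exact ⟨x, by rw [htil]; exact ⟨hx, show c x ≤ c x from le_rfl⟩⟩
  set A : ℕ → Set ℝ := fun n => Ico (0:ℝ) 1 ∩ (fun x => (n : ℝ) + x) ⁻¹' E with hA
  have hAm : ∀ n, MeasurableSet (A n) :=
    fun n => measurableSet_Ico.inter (hEm.preimage (measurable_const_add _))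
  have hE1 : volume E = ∑ n ∈ Finset.range N, volume (A n) := by
    have hdecomp : E = ⋃ n ∈ Finset.range N, E ∩ Ico (n : ℝ) (n + 1) := by
      ext x
      simp only [mem_iUnion, Finset.mem_range, mem_inter_iff, mem_Ico, exists_prop]
      constructor
      · intro hx
        have h0 : (0:ℝ) ≤ x := hE hx
        refine ⟨⌊x⌋₊, ?_, hx, Nat.floor_le h0, Nat.lt_floor_add_one x⟩
        exact (Nat.floor_lt h0).mpr (by exact_mod_cast hlt x hx)
      · rintro ⟨n, -, hx, -⟩; exact hx
    have hdisj : (↑(Finset.range N) : Set ℕ).PairwiseDisjoint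
        (fun n : ℕ => E ∩ Ico (n : ℝ) (n + 1)) := by
      intro i _ j _ hij
      apply Set.disjoint_left.mpr
      rintro x ⟨-, hi1, hi2⟩ ⟨-, hj1, hj2⟩
      have a1 : (i : ℝ) < j + 1 := lt_of_le_of_lt hi1 hj2
      have a2 : (j : ℝ) < i + 1 := lt_of_le_of_lt hj1 hi2
      have b1 : (i : ℕ) < j + 1 := by exact_mod_cast a1
      have b2 : (j : ℕ) < i + 1 := by exact_mod_cast a2
      omega
    rw [hdecomp, measure_biUnion_finset hdisj (fun n _ => hEm.inter measurableSet_Ico)]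
    apply Finset.sum_congr rfl
    intro n _
    have heq : A n = (fun x => x + (n:ℝ)) ⁻¹' (E ∩ Ico (n:ℝ) (n+1)) := by
      ext x
      simp only [hA, mem_inter_iff, mem_preimage, mem_Ico]
      constructor
      · rintro ⟨⟨h0, h1⟩, h2⟩
        exact ⟨by rwa [add_comm] at h2, by linarith, by linarith⟩
      · rintro ⟨h2, h3, h4⟩
        exact ⟨⟨by linarith, by linarith⟩, by rwa [add_comm]⟩
    rw [← measure_preimage_add_right volume (n : ℝ) (E ∩ Ico (n:ℝ) (n+1)), ← heq]
  have hsum1 : ∑ n ∈ Finset.range N, volume (A n)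
      = ∫⁻ x, ∑ n ∈ Finset.range N, (A n).indicator 1 x := by
    rw [lintegral_finset_sum _ (fun n _ => (measurable_one.indicator (hAm n)))]
    exact Finset.sum_congr rfl fun n _ => (lintegral_indicator_one (hAm n)).symm
  have hsum2 : ∑ k ∈ Finset.Icc 1 (KE E), volume (tildeSet E k)
      = ∫⁻ x, ∑ k ∈ Finset.Icc 1 (KE E), (tildeSet E k).indicator 1 x := by
    rw [lintegral_finset_sum _ (fun k _ => (measurable_one.indicator (htilm k)))]
    exact Finset.sum_congr rfl fun k _ => (lintegral_indicator_one (htilm k)).symm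
  rw [hE1, hsum1, hsum2]
  apply lintegral_congr
  intro x
  by_cases hx : x ∈ Ico (0:ℝ) 1
  · have hL : ∑ n ∈ Finset.range N, (A n).indicator (1 : ℝ → ENNReal) x
        = (c x : ENNReal) := by
      simp only [Set.indicator_apply, hA, mem_inter_iff, mem_preimage, hx, true_and,
        Pi.one_apply, hc]
      push_cast
      apply Finset.sum_congr rfl
      intro n _
      split <;> simp
    have hRs : ∑ k ∈ Finset.Icc 1 (KE E), (tildeSet E k).indicator (1 : ℝ → ENNReal) x
        = (c x : ENNReal) := by
      have hind : ∀ k, (tildeSet E k).indicator (1 : ℝ → ENNReal) x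
          = if k ≤ c x then 1 else 0 := by
        intro k
        rw [htil k]
        by_cases h : k ≤ c x
        · rw [if_pos h, Set.indicator_of_mem (show x ∈ Ico (0:ℝ) 1 ∩ {y | k ≤ c y} from ⟨hx, h⟩)]; rfl
        · rw [if_neg h, Set.indicator_of_notMem (fun hm => h hm.2)]
      have hf : (Finset.Icc 1 (KE E)).filter (fun k => k ≤ c x)
          = Finset.Icc 1 (c x) := by
        ext k
        simp only [Finset.mem_filter, Finset.mem_Icc]
        have := hcK x hx
        omega
      simp_rw [hind]
      rw [← Finset.sum_filter, hf, Finset.sum_const, Nat.card_Icc]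
      simp
    rw [hL, hRs]
  · have h1 : ∀ n, (A n).indicator (1:ℝ→ENNReal) x = 0 := fun n =>
      Set.indicator_of_notMem (fun hm => hx hm.1) _
    have h2 : ∀ k, (tildeSet E k).indicator (1:ℝ→ENNReal) x = 0 := fun k =>
      Set.indicator_of_notMem (fun hm => hx (by rw [htil] at hm; exact hm.1)) _
    simp [h1, h2]
end

section
/- Let A, B ⊆ ℝ be closed bounded sets of nonzero Lebesgue measure with A ⊆ ℝ≥0, 0 = min B and 1 = sup B, let b = λ(B), let K be a positive integer and 0 ≤ δ < 1 with λ(A)/b = K(K−1)/2 + Kδ, suppose λ(A+B) = λ(A) + (K+δ+ε)b with ε > 0, and suppose K_A = K, where K_A is defined from the sets Ã_k. Set S = A+B and define, for each k, S̃_k = {x ∈ [0,1) : #{n ∈ ℕ : n + x ∈ S} ≥ k}. Then ε·b = Σ_{k=K+2}^{K_S} μ(S̃_k) + Σ_{k=2}^{K+1} ((k−1)/K)·(μ(S̃_k) − μ(Ã_{k−1})) + Σ_{k=1}^{K} ((K+1−k)/K)·(μ(S̃_k) − μ(Ã_k) − b). -/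
open MeasureTheory Set Pointwise
open scoped ENNReal

namespace EpsAux

open Classical in
/-- the finset of integer levels hit by `x`. -/
noncomputable def cnt (E : Set ℝ) (N : ℕ) (x : ℝ) : Finset ℕ :=
  (Finset.range N).filter (fun n => (n : ℝ) + x ∈ E)

noncomputable def Aset (E : Set ℝ) (n : ℕ) : Set ℝ :=
  Set.Ico (0:ℝ) 1 ∩ (fun x => (n : ℝ) + x) ⁻¹' E

lemma natset_eq_cnt {E : Set ℝ} {N : ℕ} (hEsub : E ⊆ Set.Ico (0:ℝ) N) {x : ℝ}
    (hx : 0 ≤ x) : {n : ℕ | (n : ℝ) + x ∈ E} = ↑(cnt E N x) := by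
  ext n
  simp only [cnt, Finset.coe_filter, Finset.mem_range, mem_setOf_eq, Finset.mem_coe]
  constructor
  · intro h
    refine ⟨?_, h⟩
    have h2 := (hEsub h).2
    have h3 : (n : ℝ) < N := by linarith
    exact_mod_cast h3
  · exact fun h => h.2

lemma ncard_eq_cnt {E : Set ℝ} {N : ℕ} (hEsub : E ⊆ Set.Ico (0:ℝ) N) {x : ℝ}
    (hx : 0 ≤ x) : {n : ℕ | (n : ℝ) + x ∈ E}.ncard = (cnt E N x).card := by
  rw [natset_eq_cnt hEsub hx, Set.ncard_coe_finset]

end EpsAux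

namespace EpsAux

lemma mem_cnt {E : Set ℝ} {N n : ℕ} {x : ℝ} :
    n ∈ cnt E N x ↔ n < N ∧ (n : ℝ) + x ∈ E := by
  simp [cnt]

lemma cnt_subset (E : Set ℝ) (N : ℕ) (x : ℝ) : cnt E N x ⊆ Finset.range N :=
  fun n hn => Finset.mem_range.2 (mem_cnt.1 hn).1

lemma cnt_card_le (E : Set ℝ) (N : ℕ) (x : ℝ) : (cnt E N x).card ≤ N := by
  calc (cnt E N x).card ≤ (Finset.range N).card := Finset.card_le_card (cnt_subset E N x)
  _ = N := Finset.card_range N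

lemma Aset_subset (E : Set ℝ) (n : ℕ) : Aset E n ⊆ Set.Ico (0:ℝ) 1 := fun _ h => h.1

lemma mem_Aset {E : Set ℝ} {n : ℕ} {x : ℝ} :
    x ∈ Aset E n ↔ x ∈ Set.Ico (0:ℝ) 1 ∧ (n : ℝ) + x ∈ E := Iff.rfl

lemma measurableSet_Aset {E : Set ℝ} (hE : MeasurableSet E) (n : ℕ) :
    MeasurableSet (Aset E n) :=
  measurableSet_Ico.inter ((measurable_const_add (n:ℝ)) hE)

lemma tildeSet_subset (E : Set ℝ) (k : ℕ) : tildeSet E k ⊆ Set.Ico (0:ℝ) 1 :=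
  fun _ h => h.1

lemma mem_tildeSet_iff {E : Set ℝ} {N : ℕ} (hEsub : E ⊆ Set.Ico (0:ℝ) N) {k : ℕ} {x : ℝ} :
    x ∈ tildeSet E k ↔ x ∈ Set.Ico (0:ℝ) 1 ∧ k ≤ (cnt E N x).card := by
  constructor
  · rintro ⟨hx, hk⟩
    exact ⟨hx, by rwa [ncard_eq_cnt hEsub hx.1] at hk⟩
  · rintro ⟨hx, hk⟩
    exact ⟨hx, by rwa [ncard_eq_cnt hEsub hx.1]⟩

lemma tildeSet_eq_union {E : Set ℝ} {N : ℕ} (hEsub : E ⊆ Set.Ico (0:ℝ) N) {k : ℕ}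
    (hk : 1 ≤ k) :
    tildeSet E k = ⋃ T ∈ (Finset.range N).powersetCard k, ⋂ n ∈ T, Aset E n := by
  ext x
  simp only [mem_iUnion, mem_iInter, Finset.mem_powersetCard, exists_prop]
  rw [mem_tildeSet_iff hEsub]
  constructor
  · rintro ⟨hx, hcard⟩
    obtain ⟨T, hTsub, hTcard⟩ := Finset.exists_subset_card_eq hcard
    refine ⟨T, ⟨hTsub.trans (cnt_subset E N x), hTcard⟩, fun n hn => ?_⟩
    exact ⟨hx, (mem_cnt.1 (hTsub hn)).2⟩
  · rintro ⟨T, ⟨hTsub, hTcard⟩, hT⟩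
    obtain ⟨n0, hn0⟩ := Finset.card_pos.1 (hTcard ▸ hk)
    have hx : x ∈ Set.Ico (0:ℝ) 1 := (hT n0 hn0).1
    refine ⟨hx, ?_⟩
    calc k = T.card := hTcard.symm
    _ ≤ (cnt E N x).card := Finset.card_le_card (fun n hn =>
        mem_cnt.2 ⟨Finset.mem_range.1 (hTsub hn), (hT n hn).2⟩)

lemma tildeSet_zero (E : Set ℝ) : tildeSet E 0 = Set.Ico (0:ℝ) 1 := by
  ext x; simp [tildeSet]

lemma measurableSet_tildeSet {E : Set ℝ} (hE : MeasurableSet E) {N : ℕ}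
    (hEsub : E ⊆ Set.Ico (0:ℝ) N) (k : ℕ) : MeasurableSet (tildeSet E k) := by
  rcases Nat.eq_zero_or_pos k with rfl | hk
  · rw [tildeSet_zero]; exact measurableSet_Ico
  · rw [tildeSet_eq_union hEsub hk]
    exact ((Finset.range N).powersetCard k).measurableSet_biUnion
      (fun T _ => T.measurableSet_biInter (fun n _ => measurableSet_Aset hE n))

end EpsAux

namespace EpsAux

lemma pointwise_sum {E : Set ℝ} {N : ℕ} (hEsub : E ⊆ Set.Ico (0:ℝ) N) (x : ℝ) :
    (∑ n ∈ Finset.range N, (Aset E n).indicator (1 : ℝ → ℝ≥0∞) x)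
      = ∑ k ∈ Finset.Icc 1 N, (tildeSet E k).indicator (1 : ℝ → ℝ≥0∞) x := by
  classical
  by_cases hx : x ∈ Set.Ico (0:ℝ) 1
  · have stepL : ∀ n ∈ Finset.range N, (Aset E n).indicator (1 : ℝ → ℝ≥0∞) x
        = if n ∈ cnt E N x then 1 else 0 := by
      intro n _
      rw [Set.indicator_apply]
      congr 1
      simp only [eq_iff_iff, mem_Aset, mem_cnt]
      constructor
      · rintro ⟨_, hE'⟩
        have h2 := (hEsub hE').2
        have h3 : (n : ℝ) < N := by
          have := hx.1; linarith
        exact ⟨by exact_mod_cast h3, hE'⟩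
      · rintro ⟨_, hE'⟩; exact ⟨hx, hE'⟩
    have stepR : ∀ k ∈ Finset.Icc 1 N, (tildeSet E k).indicator (1 : ℝ → ℝ≥0∞) x
        = if k ∈ Finset.Icc 1 (cnt E N x).card then 1 else 0 := by
      intro k hk
      rw [Set.indicator_apply]
      congr 1
      simp only [eq_iff_iff, Finset.mem_Icc, mem_tildeSet_iff hEsub]
      exact ⟨fun h => ⟨(Finset.mem_Icc.1 hk).1, h.2⟩, fun h => ⟨hx, h.2⟩⟩
    rw [Finset.sum_congr rfl stepL, Finset.sum_ite_mem,
      Finset.inter_eq_right.2 (cnt_subset E N x), Finset.sum_const,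
      Finset.sum_congr rfl stepR, Finset.sum_ite_mem,
      Finset.inter_eq_right.2 (Finset.Icc_subset_Icc_right (cnt_card_le E N x)),
      Finset.sum_const, Nat.card_Icc]
    simp
  · rw [Finset.sum_congr rfl (fun n _ =>
        Set.indicator_of_notMem (fun h => hx (Aset_subset E n h)) _),
      Finset.sum_congr rfl (fun k _ =>
        Set.indicator_of_notMem (fun h => hx (tildeSet_subset E k h)) _)]
    simp

lemma Aset_eq_preimage (E : Set ℝ) (n : ℕ) :
    Aset E n = (fun x => (n : ℝ) + x) ⁻¹' (E ∩ Set.Ico (n : ℝ) ((n : ℝ) + 1)) := by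
  ext x
  simp only [mem_Aset, Set.mem_preimage, Set.mem_inter_iff, Set.mem_Ico]
  constructor
  · rintro ⟨⟨h0, h1⟩, hE⟩; exact ⟨hE, by linarith, by linarith⟩
  · rintro ⟨hE, h0, h1⟩; exact ⟨⟨by linarith, by linarith⟩, hE⟩

lemma volume_Aset (E : Set ℝ) (n : ℕ) :
    volume (Aset E n) = volume (E ∩ Set.Ico (n : ℝ) ((n : ℝ) + 1)) := by
  rw [Aset_eq_preimage]
  exact measure_preimage_add volume _ _

lemma volume_eq_sum_Aset {E : Set ℝ} (hE : MeasurableSet E) {N : ℕ}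
    (hEsub : E ⊆ Set.Ico (0:ℝ) N) :
    volume E = ∑ n ∈ Finset.range N, volume (Aset E n) := by
  have hcover : E = ⋃ n ∈ Finset.range N, E ∩ Set.Ico (n : ℝ) ((n : ℝ) + 1) := by
    ext x
    simp only [mem_iUnion, Finset.mem_range, exists_prop, Set.mem_inter_iff, Set.mem_Ico]
    constructor
    · intro hxE
      have h0 := (hEsub hxE).1
      have h1 := (hEsub hxE).2
      refine ⟨⌊x⌋₊, ?_, hxE, Nat.floor_le h0, Nat.lt_floor_add_one x⟩
      exact (Nat.floor_lt h0).2 h1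
    · rintro ⟨n, _, hxE, _⟩; exact hxE
  have hdisj : (↑(Finset.range N) : Set ℕ).PairwiseDisjoint
      (fun n : ℕ => E ∩ Set.Ico (n : ℝ) ((n : ℝ) + 1)) := by
    intro m _ n _ hmn
    refine Set.disjoint_left.2 ?_
    rintro x ⟨_, hm⟩ ⟨_, hn⟩
    rcases lt_or_gt_of_ne hmn with h | h
    · have : (m : ℝ) + 1 ≤ n := by exact_mod_cast h
      rcases hm with ⟨_, hm2⟩; rcases hn with ⟨hn1, _⟩; linarith
    · have : (n : ℝ) + 1 ≤ m := by exact_mod_cast h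
      rcases hm with ⟨hm1, _⟩; rcases hn with ⟨_, hn2⟩; linarith
  rw [Finset.sum_congr rfl (fun n _ => volume_Aset E n)]
  conv_lhs => rw [hcover]
  exact measure_biUnion_finset hdisj (fun n _ => hE.inter measurableSet_Ico)

lemma volume_eq_sum_tilde {E : Set ℝ} (hE : MeasurableSet E) {N : ℕ}
    (hEsub : E ⊆ Set.Ico (0:ℝ) N) :
    volume E = ∑ k ∈ Finset.Icc 1 N, volume (tildeSet E k) := by
  have h1 : ∀ n ∈ Finset.range N, volume (Aset E n)
      = ∫⁻ x, (Aset E n).indicator (1 : ℝ → ℝ≥0∞) x := fun n _ =>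
    (lintegral_indicator_one (measurableSet_Aset hE n)).symm
  have h2 : ∀ k ∈ Finset.Icc 1 N, volume (tildeSet E k)
      = ∫⁻ x, (tildeSet E k).indicator (1 : ℝ → ℝ≥0∞) x := fun k _ =>
    (lintegral_indicator_one (measurableSet_tildeSet hE hEsub k)).symm
  rw [volume_eq_sum_Aset hE hEsub, Finset.sum_congr rfl h1, Finset.sum_congr rfl h2,
    ← lintegral_finset_sum _ (fun n _ => measurable_one.indicator (measurableSet_Aset hE n)),
    ← lintegral_finset_sum _ (fun k _ =>
        measurable_one.indicator (measurableSet_tildeSet hE hEsub k))]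
  exact lintegral_congr (pointwise_sum hEsub)

end EpsAux

namespace EpsAux

lemma tildeSet_eq_empty {E : Set ℝ} {N : ℕ} (hEsub : E ⊆ Set.Ico (0:ℝ) N) {k : ℕ}
    (hk : N < k) : tildeSet E k = ∅ := by
  ext x
  simp only [mem_empty_iff_false, iff_false]
  intro hx
  have h := (mem_tildeSet_iff hEsub).1 hx
  exact absurd (h.2.trans (cnt_card_le E N x)) (Nat.not_le.2 hk)

lemma bddAbove_KE {E : Set ℝ} {N : ℕ} (hEsub : E ⊆ Set.Ico (0:ℝ) N) :
    ∀ k ∈ {k : ℕ | tildeSet E k ≠ ∅}, k ≤ N := by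
  intro k hk
  by_contra h
  exact hk (tildeSet_eq_empty hEsub (Nat.not_le.1 h))

lemma KE_le {E : Set ℝ} {N : ℕ} (hEsub : E ⊆ Set.Ico (0:ℝ) N) : KE E ≤ N :=
  csSup_le' (bddAbove_KE hEsub)

lemma tildeSet_eq_empty_of_KE_lt {E : Set ℝ} {N : ℕ} (hEsub : E ⊆ Set.Ico (0:ℝ) N)
    {k : ℕ} (h : KE E < k) : tildeSet E k = ∅ := by
  by_contra hne
  exact absurd (le_csSup ⟨N, bddAbove_KE hEsub⟩ hne) (Nat.not_le.2 h)

lemma volume_tildeSet_ne_top (E : Set ℝ) (k : ℕ) : volume (tildeSet E k) ≠ ⊤ := by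
  refine ne_top_of_le_ne_top ?_ (measure_mono (tildeSet_subset E k))
  simp [Real.volume_Ico]

lemma toReal_volume_eq_sum_tilde {E : Set ℝ} (hE : MeasurableSet E) {N : ℕ}
    (hEsub : E ⊆ Set.Ico (0:ℝ) N) :
    (volume E).toReal = ∑ k ∈ Finset.Icc 1 N, (volume (tildeSet E k)).toReal := by
  rw [volume_eq_sum_tilde hE hEsub]
  exact ENNReal.toReal_sum (fun k _ => volume_tildeSet_ne_top E k)

lemma sum_Icc_cast (K : ℕ) : (∑ k ∈ Finset.Icc 1 K, (k:ℝ)) = K * (K+1) / 2 := by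
  induction K with
  | zero => simp
  | succ n ih =>
    rw [Finset.sum_Icc_succ_top (by omega : 1 ≤ n + 1), ih]
    push_cast
    ring

end EpsAux

namespace EpsAux

lemma alg (s a : ℕ → ℝ) (b : ℝ) (K N : ℕ) (hK : 1 ≤ K) (hN : K + 1 ≤ N) :
    (∑ k ∈ Finset.Icc (K + 2) N, s k)
      + (∑ k ∈ Finset.Icc 2 (K + 1), ((k : ℝ) - 1) / (K : ℝ) * (s k - a (k - 1)))
      + (∑ k ∈ Finset.Icc 1 K, ((K : ℝ) + 1 - (k : ℝ)) / (K : ℝ) * (s k - a k - b))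
    = (∑ k ∈ Finset.Icc 1 N, s k)
      - ((K : ℝ) + 1) / (K : ℝ) * (∑ k ∈ Finset.Icc 1 K, a k)
      - b * ((K : ℝ) + 1) / 2 := by
  have hK0 : (K : ℝ) ≠ 0 := Nat.cast_ne_zero.2 (by omega)
  -- split each summand
  have e2 : ∀ k ∈ Finset.Icc 2 (K + 1), ((k : ℝ) - 1) / (K : ℝ) * (s k - a (k - 1))
      = ((k : ℝ) - 1) / (K : ℝ) * s k - ((k : ℝ) - 1) / (K : ℝ) * a (k - 1) := by
    intro k _; ring
  have e3 : ∀ k ∈ Finset.Icc 1 K, ((K : ℝ) + 1 - (k : ℝ)) / (K : ℝ) * (s k - a k - b)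
      = ((K : ℝ) + 1 - (k : ℝ)) / (K : ℝ) * s k
        - ((K : ℝ) + 1 - (k : ℝ)) / (K : ℝ) * a k
        - ((K : ℝ) + 1 - (k : ℝ)) / (K : ℝ) * b := by
    intro k _; ring
  rw [Finset.sum_congr rfl e2, Finset.sum_congr rfl e3, Finset.sum_sub_distrib,
    Finset.sum_sub_distrib, Finset.sum_sub_distrib]
  -- s-sums over Icc 2 (K+1) and Icc 1 K extend to Icc 1 (K+1)
  have hs2 : (∑ k ∈ Finset.Icc 2 (K + 1), ((k : ℝ) - 1) / (K : ℝ) * s k)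
      = ∑ k ∈ Finset.Icc 1 (K + 1), ((k : ℝ) - 1) / (K : ℝ) * s k := by
    refine Finset.sum_subset (Finset.Icc_subset_Icc_left (by omega)) ?_
    intro k hk hk'
    have : k = 1 := by
      simp only [Finset.mem_Icc] at hk hk'; omega
    subst this; norm_num
  have hs3 : (∑ k ∈ Finset.Icc 1 K, ((K : ℝ) + 1 - (k : ℝ)) / (K : ℝ) * s k)
      = ∑ k ∈ Finset.Icc 1 (K + 1), ((K : ℝ) + 1 - (k : ℝ)) / (K : ℝ) * s k := by
    refine Finset.sum_subset (Finset.Icc_subset_Icc_right (by omega)) ?_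
    intro k hk hk'
    have : k = K + 1 := by
      simp only [Finset.mem_Icc] at hk hk'; omega
    subst this; push_cast; norm_num
  -- combine the two s-sums over Icc 1 (K+1)
  have hs : (∑ k ∈ Finset.Icc 1 (K + 1), ((k : ℝ) - 1) / (K : ℝ) * s k)
      + (∑ k ∈ Finset.Icc 1 (K + 1), ((K : ℝ) + 1 - (k : ℝ)) / (K : ℝ) * s k)
      = ∑ k ∈ Finset.Icc 1 (K + 1), s k := by
    rw [← Finset.sum_add_distrib]
    refine Finset.sum_congr rfl (fun k _ => ?_)
    field_simp
    ring
  -- total s-sum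
  have hstot : (∑ k ∈ Finset.Icc (K + 2) N, s k) + (∑ k ∈ Finset.Icc 1 (K + 1), s k)
      = ∑ k ∈ Finset.Icc 1 N, s k := by
    rw [show Finset.Icc (K + 2) N = Finset.Ioc (K + 1) N from Finset.Icc_add_one_left_eq_Ioc (K + 1) N, show Finset.Icc 1 (K + 1) = Finset.Ioc 0 (K + 1) from Finset.Icc_add_one_left_eq_Ioc 0 (K + 1), show Finset.Icc 1 N = Finset.Ioc 0 N from Finset.Icc_add_one_left_eq_Ioc 0 N]
    rw [add_comm]
    exact Finset.sum_Ioc_consecutive s (by omega) (by omega)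
  -- a-sum reindexing
  have ha2 : (∑ k ∈ Finset.Icc 2 (K + 1), ((k : ℝ) - 1) / (K : ℝ) * a (k - 1))
      = ∑ k ∈ Finset.Icc 1 K, (k : ℝ) / (K : ℝ) * a k := by
    have : Finset.Icc 2 (K + 1) = (Finset.Icc 1 K).map (addRightEmbedding 1) := by
      rw [Finset.map_add_right_Icc]
    rw [this, Finset.sum_map]
    refine Finset.sum_congr rfl (fun k hk => ?_)
    simp only [addRightEmbedding_apply, Nat.add_sub_cancel]
    push_cast
    ring_nf
  -- combine a-sums
  have ha : (∑ k ∈ Finset.Icc 1 K, (k : ℝ) / (K : ℝ) * a k)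
      + (∑ k ∈ Finset.Icc 1 K, ((K : ℝ) + 1 - (k : ℝ)) / (K : ℝ) * a k)
      = ((K : ℝ) + 1) / (K : ℝ) * (∑ k ∈ Finset.Icc 1 K, a k) := by
    rw [← Finset.sum_add_distrib, Finset.mul_sum]
    refine Finset.sum_congr rfl (fun k _ => ?_)
    field_simp
    ring
  -- b-sum
  have hb : (∑ k ∈ Finset.Icc 1 K, ((K : ℝ) + 1 - (k : ℝ)) / (K : ℝ) * b)
      = b * ((K : ℝ) + 1) / 2 := by
    have h1 : ∀ k ∈ Finset.Icc 1 K, ((K : ℝ) + 1 - (k : ℝ)) / (K : ℝ) * b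
        = ((K : ℝ) + 1) / (K : ℝ) * b - (k : ℝ) * (b / (K : ℝ)) := by
      intro k _; field_simp
    rw [Finset.sum_congr rfl h1, Finset.sum_sub_distrib, Finset.sum_const,
      ← Finset.sum_mul, sum_Icc_cast, Nat.card_Icc]
    simp only [Nat.add_sub_cancel, nsmul_eq_mul]
    field_simp
    ring
  rw [hs2, ha2]
  have expand : ∀ X Y Z W V U : ℝ, X + (Y - Z) + (W - V - U) = (X + (Y + W)) - (Z + V) - U := by
    intro X Y Z W V U; ring
  rw [expand, hs3, hs, hstot, ha, hb]

end EpsAux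


open EpsAux

/-- The decomposition of the error `ε` along the levels of `S = A+B`:
`εb = Σ_{k=K+2}^{K_S} μ(S̃_k) + Σ_{k=2}^{K+1} ((k-1)/K)(μ(S̃_k) - μ(Ã_{k-1}))
  + Σ_{k=1}^{K} ((K+1-k)/K)(μ(S̃_k) - μ(Ã_k) - b)`. -/
theorem eps_eq_sum (A B : Set ℝ)
    (hAcl : IsClosed A) (hBcl : IsClosed B)
    (hAbd : Bornology.IsBounded A) (hBbd : Bornology.IsBounded B)
    (hA0 : volume A ≠ 0) (hB0 : volume B ≠ 0)
    (hApos : A ⊆ {x : ℝ | 0 ≤ x})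
    (hBmin : IsLeast B 0) (hBsup : sSup B = 1)
    (b : ℝ) (hb : (volume B).toReal = b)
    (K : ℕ) (hK : 1 ≤ K) (δ : ℝ) (hδ0 : 0 ≤ δ) (hδ1 : δ < 1)
    (hKδ : (volume A).toReal / b = (K : ℝ) * ((K : ℝ) - 1) / 2 + (K : ℝ) * δ)
    (ε : ℝ) (hε0 : 0 < ε)
    (heq : (volume (A + B)).toReal
      = (volume A).toReal + ((K : ℝ) + δ + ε) * b)
    (hKA : KE A = K) :
    ε * b
      = (∑ k ∈ Finset.Icc (K + 2) (KE (A + B)),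
          (volume (tildeSet (A + B) k)).toReal)
        + (∑ k ∈ Finset.Icc 2 (K + 1), ((k : ℝ) - 1) / (K : ℝ)
            * ((volume (tildeSet (A + B) k)).toReal
              - (volume (tildeSet A (k - 1))).toReal))
        + (∑ k ∈ Finset.Icc 1 K, ((K : ℝ) + 1 - (k : ℝ)) / (K : ℝ)
            * ((volume (tildeSet (A + B) k)).toReal
              - (volume (tildeSet A k)).toReal - b)) := by
  -- basic facts
  have hB01 : B ⊆ Set.Icc (0:ℝ) 1 := by
    intro y hy
    exact ⟨hBmin.2 hy, hBsup ▸ le_csSup hBbd.bddAbove hy⟩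
  obtain ⟨M, hM⟩ := hAbd.bddAbove
  set N : ℕ := max (⌊M⌋₊ + 2) (K + 2) with hN
  have hNK : K + 1 ≤ N := le_trans (by omega) (le_max_right _ _)
  have hKN : K ≤ N := by omega
  have hSsub : A + B ⊆ Set.Ico (0:ℝ) N := by
    rintro z ⟨a, ha, y, hy, rfl⟩
    show a + y ∈ Set.Ico (0:ℝ) N
    have h0a : 0 ≤ a := hApos ha
    have h0y := hB01 hy
    have haM : a ≤ M := hM ha
    have hMf : M < ⌊M⌋₊ + 1 := Nat.lt_floor_add_one M
    have hfloorN : (⌊M⌋₊ : ℝ) + 2 ≤ N := by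
      have : (⌊M⌋₊ + 2 : ℕ) ≤ N := le_max_left _ _
      exact_mod_cast this
    constructor
    · linarith [h0y.1]
    · have : a + y ≤ M + 1 := by linarith [h0y.2]
      linarith
  have hAsub : A ⊆ Set.Ico (0:ℝ) N := by
    intro a ha
    have : a + 0 ∈ A + B := Set.add_mem_add ha hBmin.1
    simpa using hSsub this
  have hAm : MeasurableSet A := hAcl.measurableSet
  have hSm : MeasurableSet (A + B) :=
    (((Metric.isCompact_of_isClosed_isBounded hAcl hAbd).add
      (Metric.isCompact_of_isClosed_isBounded hBcl hBbd)).isClosed).measurableSet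
  have hKS_le : KE (A + B) ≤ N := KE_le hSsub
  -- positivity of b
  have hBfin : volume B ≠ ⊤ := by
    refine ne_top_of_le_ne_top ?_ (measure_mono hB01)
    simp [Real.volume_Icc]
  have hbpos : 0 < b := hb ▸ ENNReal.toReal_pos hB0 hBfin
  have hKne : (K : ℝ) ≠ 0 := Nat.cast_ne_zero.2 (by omega)
  have hAval : (volume A).toReal = ((K : ℝ) * ((K : ℝ) - 1) / 2 + (K : ℝ) * δ) * b :=
    (div_eq_iff (ne_of_gt hbpos)).1 hKδ
  -- sums
  have hsz : ∀ k, KE (A + B) < k → (volume (tildeSet (A + B) k)).toReal = 0 := by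
    intro k hk; rw [tildeSet_eq_empty_of_KE_lt hSsub hk]; simp
  have haz : ∀ k, K < k → (volume (tildeSet A k)).toReal = 0 := by
    intro k hk
    rw [tildeSet_eq_empty_of_KE_lt hAsub (hKA ▸ hk)]; simp
  have h1 : (∑ k ∈ Finset.Icc (K + 2) (KE (A + B)),
        (volume (tildeSet (A + B) k)).toReal)
      = ∑ k ∈ Finset.Icc (K + 2) N, (volume (tildeSet (A + B) k)).toReal := by
    refine Finset.sum_subset (Finset.Icc_subset_Icc_right hKS_le) ?_
    intro k hk hk'
    simp only [Finset.mem_Icc] at hk hk'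
    exact hsz k (by omega)
  have hsA : (volume A).toReal
      = ∑ k ∈ Finset.Icc 1 K, (volume (tildeSet A k)).toReal := by
    rw [toReal_volume_eq_sum_tilde hAm hAsub]
    refine (Finset.sum_subset (Finset.Icc_subset_Icc_right hKN) ?_).symm
    intro k hk hk'
    simp only [Finset.mem_Icc] at hk hk'
    exact haz k (by omega)
  have hsS : (∑ k ∈ Finset.Icc 1 N, (volume (tildeSet (A + B) k)).toReal)
      = (volume A).toReal + ((K : ℝ) + δ + ε) * b := by
    rw [← toReal_volume_eq_sum_tilde hSm hSsub]; exact heq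
  rw [h1, alg (fun k => (volume (tildeSet (A + B) k)).toReal)
      (fun k => (volume (tildeSet A k)).toReal) b K N hK hNK, hsS, ← hsA, hAval]
  field_simp
  ring
end

section
/- Let A ⊆ ℝ≥0 be a closed bounded set of nonzero Lebesgue measure, let b > 0, let K be a positive integer and 0 ≤ δ < 1 with λ(A)/b = K(K−1)/2 + Kδ, and suppose K_A = K, where K_A is defined from the sets Ã_k. Then μ(Ã_K) = δ·b + (1/K)·Σ_{k=1}^{K−1} k·(μ(Ã_{k+1}) − μ(Ã_k) + b). -/
open MeasureTheory Set Pointwise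

lemma abel_aux (a : ℕ → ℝ) (m : ℕ) :
    ∑ k ∈ Finset.Icc 1 m, (k : ℝ) * (a (k + 1) - a k)
      = m * a (m + 1) - ∑ k ∈ Finset.Icc 1 m, a k := by
  induction m with
  | zero => simp
  | succ n ih =>
    rw [Finset.sum_Icc_succ_top (by omega), Finset.sum_Icc_succ_top (by omega : 1 ≤ n + 1), ih]
    push_cast
    ring

lemma gauss_aux (m : ℕ) : ∑ k ∈ Finset.Icc 1 m, (k : ℝ) = m * (m + 1) / 2 := by
  induction m with
  | zero => simp
  | succ n ih =>
    rw [Finset.sum_Icc_succ_top (by omega), ih]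
    push_cast
    ring

/-- Lemma on the measure of the top level `Ã_K`:
`μ(Ã_K) = δb + (1/K) Σ_{k=1}^{K-1} k·(μ(Ã_{k+1}) - μ(Ã_k) + b)`. -/
theorem measure_tilde_top (A : Set ℝ)
    (hAcl : IsClosed A) (hAbd : Bornology.IsBounded A)
    (hA0 : volume A ≠ 0) (hApos : A ⊆ {x : ℝ | 0 ≤ x})
    (b : ℝ) (hb : 0 < b)
    (K : ℕ) (hK : 1 ≤ K) (δ : ℝ) (hδ0 : 0 ≤ δ) (hδ1 : δ < 1)
    (hKδ : (volume A).toReal / b = (K : ℝ) * ((K : ℝ) - 1) / 2 + (K : ℝ) * δ)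
    (hKA : KE A = K) :
    (volume (tildeSet A K)).toReal
      = δ * b + 1 / (K : ℝ)
        * ∑ k ∈ Finset.Icc 1 (K - 1), (k : ℝ)
            * ((volume (tildeSet A (k + 1))).toReal
              - (volume (tildeSet A k)).toReal + b) := by
  classical
  -- choose N with A ⊆ [0, N)
  obtain ⟨R, hR⟩ := hAbd.subset_closedBall 0
  set N : ℕ := ⌈R⌉₊ + 1 with hNdef
  have hN : A ⊆ Set.Ico (0 : ℝ) N := by
    intro x hx
    refine ⟨hApos hx, ?_⟩
    have h1 := hR hx
    rw [Metric.mem_closedBall, Real.dist_eq, sub_zero] at h1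
    have hxR : x ≤ R := (abs_le.mp h1).2
    have hceil : R ≤ (⌈R⌉₊ : ℝ) := Nat.le_ceil R
    have : (N : ℝ) = (⌈R⌉₊ : ℝ) + 1 := by rw [hNdef]; push_cast; ring
    linarith
  -- the counting function
  set g : ℝ → ℕ := fun x => ((Finset.range N).filter (fun n : ℕ => (n : ℝ) + x ∈ A)).card
    with hgdef
  have hAmeas : MeasurableSet A := hAcl.measurableSet
  have hmemA : ∀ n : ℕ, MeasurableSet {x : ℝ | (n : ℝ) + x ∈ A} :=
    fun n => hAmeas.preimage (measurable_const_add _)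
  have hg : Measurable g := by
    have hgeq : g = fun x => ∑ n ∈ Finset.range N, if (n : ℝ) + x ∈ A then 1 else 0 := by
      rw [hgdef]
      funext x
      exact Finset.card_filter _ _
    rw [hgeq]
    exact Finset.measurable_sum _
      (fun n _ => Measurable.ite (hmemA n) measurable_const measurable_const)
  have hgN : ∀ x, g x ≤ N := fun x =>
    le_trans (Finset.card_filter_le _ _) (by simp)
  -- ncard = g on [0,∞)
  have hsetg : ∀ x : ℝ, 0 ≤ x →
      {n : ℕ | (n : ℝ) + x ∈ A} = ↑((Finset.range N).filter fun n : ℕ => (n : ℝ) + x ∈ A) := by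
    intro x hx
    ext n
    simp only [Finset.coe_filter, Finset.mem_range, mem_setOf_eq]
    constructor
    · intro h
      refine ⟨?_, h⟩
      have h2 := (hN h).2
      have h3 : (n : ℝ) < (N : ℝ) := by linarith
      exact_mod_cast h3
    · exact fun h => h.2
  have hcard : ∀ x : ℝ, 0 ≤ x → {n : ℕ | (n : ℝ) + x ∈ A}.ncard = g x := by
    intro x hx
    rw [hsetg x hx, Set.ncard_coe_finset]
  -- tilde sets are superlevel sets of g
  have htilde : ∀ k : ℕ, tildeSet A k = Set.Ico (0 : ℝ) 1 ∩ g ⁻¹' Set.Ici k := by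
    intro k
    ext x
    simp only [tildeSet, mem_setOf_eq, mem_inter_iff, mem_preimage, mem_Ici]
    constructor
    · rintro ⟨h1, h2⟩
      exact ⟨h1, by rwa [hcard x h1.1] at h2⟩
    · rintro ⟨h1, h2⟩
      exact ⟨h1, by rwa [hcard x h1.1]⟩
  have htmeas : ∀ k, MeasurableSet (tildeSet A k) := fun k => by
    rw [htilde]
    exact measurableSet_Ico.inter (hg measurableSet_Ici)
  -- the slices
  set B : ℕ → Set ℝ := fun n => Set.Ico (0 : ℝ) 1 ∩ {x : ℝ | (n : ℝ) + x ∈ A} with hBdef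
  have hBmeas : ∀ n, MeasurableSet (B n) := fun n => measurableSet_Ico.inter (hmemA n)
  -- volume A = sum of slice volumes
  have hdisj : ∀ i j : ℕ, i ≠ j →
      Disjoint (A ∩ Set.Ico (i : ℝ) (i + 1)) (A ∩ Set.Ico (j : ℝ) (j + 1)) := by
    intro i j hij
    apply Set.disjoint_left.mpr
    rintro x ⟨-, hi1, hi2⟩ ⟨-, hj1, hj2⟩
    have h1 : (i : ℝ) < (j : ℝ) + 1 := lt_of_le_of_lt hi1 hj2
    have h2 : (j : ℝ) < (i : ℝ) + 1 := lt_of_le_of_lt hj1 hi2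
    have h1' : i < j + 1 := by exact_mod_cast h1
    have h2' : j < i + 1 := by exact_mod_cast h2
    omega
  have hAunion : A = ⋃ n ∈ Finset.range N, A ∩ Set.Ico (n : ℝ) (n + 1) := by
    ext x
    simp only [Set.mem_iUnion, Finset.mem_range, mem_inter_iff, mem_Ico, exists_prop]
    constructor
    · intro hx
      refine ⟨⌊x⌋₊, ?_, hx, Nat.floor_le (hApos hx), Nat.lt_floor_add_one x⟩
      exact (Nat.floor_lt (hApos hx)).mpr (hN hx).2
    · rintro ⟨n, _, hx, _⟩
      exact hx
  have h1 : volume A = ∑ n ∈ Finset.range N, volume (A ∩ Set.Ico (n : ℝ) (n + 1)) := by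
    conv_lhs => rw [hAunion]
    exact measure_biUnion_finset (fun i _ j _ h => hdisj i j h)
      (fun n _ => hAmeas.inter measurableSet_Ico)
  have h2 : ∀ n : ℕ, volume (A ∩ Set.Ico (n : ℝ) (n + 1)) = volume (B n) := by
    intro n
    have hBn : B n = (fun x => (n : ℝ) + x) ⁻¹' (A ∩ Set.Ico (n : ℝ) (n + 1)) := by
      ext x
      simp only [hBdef, mem_inter_iff, mem_preimage, mem_Ico, mem_setOf_eq]
      constructor
      · rintro ⟨⟨ha, hb'⟩, hA⟩
        exact ⟨hA, by linarith, by linarith⟩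
      · rintro ⟨hA, ha, hb'⟩
        exact ⟨⟨by linarith, by linarith⟩, hA⟩
    rw [hBn, measure_preimage_add]
  have hvolA : volume A = ∑ n ∈ Finset.range N, volume (B n) := by
    rw [h1]
    exact Finset.sum_congr rfl fun n _ => h2 n
  -- double counting via integration
  have hkey : ∑ n ∈ Finset.range N, volume (B n)
      = ∑ k ∈ Finset.Icc 1 N, volume (tildeSet A k) := by
    have e1 : ∀ x : ℝ, ∑ n ∈ Finset.range N, (B n).indicator (1 : ℝ → ENNReal) x
        = ∑ k ∈ Finset.Icc 1 N, (tildeSet A k).indicator (1 : ℝ → ENNReal) x := by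
      intro x
      by_cases hx : x ∈ Set.Ico (0 : ℝ) 1
      · have hB : ∀ n, (B n).indicator (1 : ℝ → ENNReal) x
            = if (n : ℝ) + x ∈ A then 1 else 0 := by
          intro n
          by_cases h : (n : ℝ) + x ∈ A
          · simp [Set.indicator_apply, hBdef, hx, h]
          · simp [Set.indicator_apply, hBdef, hx, h]
        have hT : ∀ k, (tildeSet A k).indicator (1 : ℝ → ENNReal) x
            = if k ≤ g x then 1 else 0 := by
          intro k
          by_cases h : k ≤ g x
          · simp [Set.indicator_apply, htilde k, hx, h]
          · simp [Set.indicator_apply, htilde k, hx, h]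
        simp only [hB, hT]
        rw [Finset.sum_boole, Finset.sum_boole]
        have hfilter : (Finset.Icc 1 N).filter (fun k => k ≤ g x) = Finset.Icc 1 (g x) := by
          ext k
          simp only [Finset.mem_filter, Finset.mem_Icc]
          have := hgN x
          omega
        rw [hfilter, Nat.card_Icc]
        norm_num [hgdef]
      · have hB : ∀ n, x ∉ B n := fun n hn => hx hn.1
        have hT : ∀ k, x ∉ tildeSet A k := fun k hk => hx hk.1
        simp [Set.indicator_of_notMem, hB, hT]
    have l1 : ∫⁻ x, ∑ n ∈ Finset.range N, (B n).indicator (1 : ℝ → ENNReal) x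
        = ∑ n ∈ Finset.range N, volume (B n) := by
      rw [lintegral_finset_sum _ (fun n _ => measurable_one.indicator (hBmeas n))]
      exact Finset.sum_congr rfl fun n _ => lintegral_indicator_one (hBmeas n)
    have l2 : ∫⁻ x, ∑ k ∈ Finset.Icc 1 N, (tildeSet A k).indicator (1 : ℝ → ENNReal) x
        = ∑ k ∈ Finset.Icc 1 N, volume (tildeSet A k) := by
      rw [lintegral_finset_sum _ (fun k _ => measurable_one.indicator (htmeas k))]
      exact Finset.sum_congr rfl fun k _ => lintegral_indicator_one (htmeas k)
    rw [← l1, ← l2]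
    exact lintegral_congr e1
  -- bound on nonempty levels
  have hboundN : ∀ m : ℕ, tildeSet A m ≠ ∅ → m ≤ N := by
    intro m hm
    obtain ⟨x, hx⟩ := Set.nonempty_iff_ne_empty.mpr hm
    have h2 : m ≤ {n : ℕ | (n : ℝ) + x ∈ A}.ncard := hx.2
    rw [hcard x hx.1.1] at h2
    exact le_trans h2 (hgN x)
  have hbdd : BddAbove {k : ℕ | tildeSet A k ≠ ∅} := ⟨N, fun m hm => hboundN m hm⟩
  have hempty : ∀ k, K < k → tildeSet A k = ∅ := by
    intro k hk
    by_contra h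
    have hle : k ≤ KE A := le_csSup hbdd h
    omega
  have hKN : K ≤ N := by
    have h0 : (0 : ℕ) ∈ {k : ℕ | tildeSet A k ≠ ∅} := by
      simp only [mem_setOf_eq]
      apply Set.nonempty_iff_ne_empty.mp
      exact ⟨0, ⟨⟨le_refl 0, zero_lt_one⟩, by simp⟩⟩
    have : KE A ≤ N := csSup_le ⟨0, h0⟩ (fun m hm => hboundN m hm)
    omega
  -- reduce to sum up to K
  have hsum : ∑ k ∈ Finset.Icc 1 N, volume (tildeSet A k)
      = ∑ k ∈ Finset.Icc 1 K, volume (tildeSet A k) := by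
    symm
    apply Finset.sum_subset
    · intro k hk
      simp only [Finset.mem_Icc] at *
      omega
    · intro k hk hk'
      simp only [Finset.mem_Icc] at hk hk'
      rw [hempty k (by omega), measure_empty]
  have hfin : ∀ k, volume (tildeSet A k) ≠ ⊤ := fun k =>
    (lt_of_le_of_lt (measure_mono (fun x hx => hx.1)) measure_Ico_lt_top).ne
  have hreal : (volume A).toReal = ∑ k ∈ Finset.Icc 1 K, (volume (tildeSet A k)).toReal := by
    rw [hvolA, hkey, hsum, ENNReal.toReal_sum (fun k _ => hfin k)]
  -- final algebra
  obtain ⟨m, rfl⟩ : ∃ m, K = m + 1 := ⟨K - 1, by omega⟩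
  have hKb : (volume A).toReal = (((m : ℝ) + 1) * (m : ℝ) / 2 + ((m : ℝ) + 1) * δ) * b := by
    rw [div_eq_iff hb.ne'] at hKδ
    rw [hKδ]
    push_cast
    ring
  set a : ℕ → ℝ := fun k => (volume (tildeSet A k)).toReal with ha
  have hS : (∑ k ∈ Finset.Icc 1 m, a k) + a (m + 1)
      = (((m : ℝ) + 1) * (m : ℝ) / 2 + ((m : ℝ) + 1) * δ) * b := by
    rw [← Finset.sum_Icc_succ_top (by omega : 1 ≤ m + 1) a, ← hreal, hKb]
  have hsum2 : ∑ k ∈ Finset.Icc 1 (m + 1 - 1), (k : ℝ) * (a (k + 1) - a k + b)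
      = ((m : ℝ) * a (m + 1) - ∑ k ∈ Finset.Icc 1 m, a k) + (m * (m + 1) / 2) * b := by
    simp only [Nat.add_sub_cancel]
    rw [← abel_aux a m, ← gauss_aux m, Finset.sum_mul, ← Finset.sum_add_distrib]
    exact Finset.sum_congr rfl fun k _ => by ring
  show a (m + 1) = δ * b + 1 / ((m + 1 : ℕ) : ℝ)
      * ∑ k ∈ Finset.Icc 1 (m + 1 - 1), (k : ℝ) * (a (k + 1) - a k + b)
  rw [hsum2]
  have hm1 : ((m : ℝ) + 1) ≠ 0 := by positivity
  push_cast
  field_simp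
  ring_nf
  ring_nf at hS
  linarith [hS]
end

section
/- For every bounded Lebesgue-measurable set E ⊆ ℝ, λ(E + {0,1}) ≥ λ(E) + μ(π(E)), where π : ℝ → 𝕋 = ℝ/ℤ is the canonical projection and E + {0,1} = E ∪ (E+1). -/
open MeasureTheory Set Pointwise

lemma pi_injOn' (n : ℤ) :
    Set.InjOn (fun x : ℝ => (x : UnitAddCircle)) (Set.Ioc (n : ℝ) ((n : ℝ) + 1)) := by
  intro x hx y hy h
  have hz : ((x - y : ℝ) : UnitAddCircle) = 0 := by
    simp only at h
    rw [AddCircle.coe_sub, h, sub_self]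
  rw [AddCircle.coe_eq_zero_iff] at hz
  obtain ⟨k, hk⟩ := hz
  have hk' : (k : ℝ) = x - y := by simpa using hk
  have h1 : (k : ℝ) < 1 := by rw [hk']; linarith [hx.2, hy.1]
  have h2 : (-1 : ℝ) < k := by rw [hk']; linarith [hx.1, hy.2]
  have hk0 : k = 0 := by
    have a1 : k < 1 := by exact_mod_cast h1
    have a2 : (-1 : ℤ) < k := by exact_mod_cast h2
    omega
  rw [hk0] at hk'
  simp at hk'
  linarith

lemma vol_image_piece (n : ℤ) (T : Set ℝ) (hT : MeasurableSet T)
    (hTsub : T ⊆ Set.Ioc (n : ℝ) ((n : ℝ) + 1)) :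
    volume ((fun x : ℝ => (x : UnitAddCircle)) '' T) = volume T := by
  have hπ : Measurable (fun x : ℝ => (x : UnitAddCircle)) := AddCircle.measurable_mk'
  have himg : MeasurableSet ((fun x : ℝ => (x : UnitAddCircle)) '' T) :=
    hT.image_of_measurable_injOn hπ ((pi_injOn' n).mono hTsub)
  have hmp := AddCircle.measurePreserving_mk 1 (n : ℝ)
  have key : volume ((fun x : ℝ => (x : UnitAddCircle)) '' T)
      = (volume.restrict (Set.Ioc (n : ℝ) ((n : ℝ) + 1)))
          ((fun x : ℝ => (x : UnitAddCircle)) ⁻¹' ((fun x : ℝ => (x : UnitAddCircle)) '' T)) := by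
    rw [← hmp.map_eq, Measure.map_apply hπ himg]
  rw [key, Measure.restrict_apply (hπ himg)]
  congr 1
  ext x
  constructor
  · rintro ⟨⟨y, hyT, hyx⟩, hxIoc⟩
    have : y = x := pi_injOn' n (hTsub hyT) hxIoc hyx
    rwa [← this]
  · intro hx
    exact ⟨⟨x, hx, rfl⟩, hTsub hx⟩

lemma vol_image_le (S : Set ℝ) (hS : MeasurableSet S) :
    volume ((fun x : ℝ => (x : UnitAddCircle)) '' S) ≤ volume S := by
  have hcover : S = ⋃ n : ℤ, S ∩ Set.Ioc (n : ℝ) ((n : ℝ) + 1) := by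
    rw [← Set.inter_iUnion, iUnion_Ioc_intCast, Set.inter_univ]
  have hdisj : Pairwise (Function.onFun Disjoint
      fun n : ℤ => S ∩ Set.Ioc (n : ℝ) ((n : ℝ) + 1)) := by
    intro m n hmn
    exact Disjoint.mono inter_subset_right inter_subset_right
      (pairwise_disjoint_Ioc_intCast (α := ℝ) hmn)
  calc volume ((fun x : ℝ => (x : UnitAddCircle)) '' S)
      = volume (⋃ n : ℤ, (fun x : ℝ => (x : UnitAddCircle)) '' (S ∩ Set.Ioc (n : ℝ) ((n : ℝ) + 1))) := by
        rw [← Set.image_iUnion, ← hcover]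
    _ ≤ ∑' n : ℤ, volume ((fun x : ℝ => (x : UnitAddCircle)) '' (S ∩ Set.Ioc (n : ℝ) ((n : ℝ) + 1))) :=
        measure_iUnion_le _
    _ = ∑' n : ℤ, volume (S ∩ Set.Ioc (n : ℝ) ((n : ℝ) + 1)) := by
        refine tsum_congr fun n => ?_
        exact vol_image_piece n _ (hS.inter measurableSet_Ioc) inter_subset_right
    _ = volume S := by
        rw [← measure_iUnion hdisj (fun n => hS.inter measurableSet_Ioc), ← hcover]

/-- For every bounded measurable set `E ⊆ ℝ`,
`λ(E + {0,1}) ≥ λ(E) + μ(π(E))`, where `π : ℝ → 𝕋 = ℝ/ℤ` is the projection. -/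
theorem volume_add_zero_one (E : Set ℝ)
    (hEbd : Bornology.IsBounded E) (hEmeas : MeasurableSet E) :
    volume (E + ({0, 1} : Set ℝ))
      ≥ volume E + volume ((fun x : ℝ => (x : UnitAddCircle)) '' E) := by
  set F : Set ℝ := (fun x => x + 1) '' E with hF
  have hFpre : F = (fun x => x - 1) ⁻¹' E := by
    ext x
    constructor
    · rintro ⟨a, ha, rfl⟩; simpa using ha
    · intro hx; exact ⟨x - 1, hx, by ring⟩
  have hFmeas : MeasurableSet F := by
    rw [hFpre]; exact hEmeas.preimage (measurable_id.sub_const 1)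
  have hEF : E + ({0, 1} : Set ℝ) = E ∪ F := by
    ext x
    simp only [Set.mem_add, Set.mem_insert_iff, Set.mem_singleton_iff, Set.mem_union, hF,
      Set.mem_image]
    constructor
    · rintro ⟨a, ha, b, hb, rfl⟩
      rcases hb with rfl | rfl
      · left; simpa using ha
      · right; exact ⟨a, ha, rfl⟩
    · rintro (hx | ⟨a, ha, rfl⟩)
      · exact ⟨x, hx, 0, Or.inl rfl, add_zero x⟩
      · exact ⟨a, ha, 1, Or.inr rfl, rfl⟩
  -- π(E) ⊆ π(F \ E)
  have hsub : (fun x : ℝ => (x : UnitAddCircle)) '' E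
      ⊆ (fun x : ℝ => (x : UnitAddCircle)) '' (F \ E) := by
    rintro _ ⟨e, he, rfl⟩
    obtain ⟨C, hC⟩ := isBounded_iff_forall_norm_le.mp hEbd
    have hbdd : ∀ n : ℤ, (e + n ∈ E) → n ≤ ⌈C - e⌉ := by
      intro n hn
      have h1 : e + (n : ℝ) ≤ C := le_trans (le_abs_self _) (hC _ hn)
      have h2 : (n : ℝ) ≤ (⌈C - e⌉ : ℝ) := le_trans (by linarith) (Int.le_ceil _)
      exact_mod_cast h2
    obtain ⟨m, hmE, hmax⟩ := Int.exists_greatest_of_bdd ⟨⌈C - e⌉, hbdd⟩ ⟨0, by simpa using he⟩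
    refine ⟨e + m + 1, ⟨⟨e + m, hmE, by ring⟩, ?_⟩, ?_⟩
    · intro hcon
      have : e + ((m + 1 : ℤ) : ℝ) ∈ E := by push_cast; convert hcon using 1; ring
      have := hmax _ this
      omega
    · show ((e + (m : ℝ) + 1 : ℝ) : UnitAddCircle) = (e : UnitAddCircle)
      have hz : (((m : ℝ) + 1 : ℝ) : UnitAddCircle) = 0 := by
        rw [AddCircle.coe_eq_zero_iff]
        exact ⟨m + 1, by simp⟩
      rw [add_assoc, AddCircle.coe_add, hz, add_zero]
  have hdisjEF : Disjoint E (F \ E) := disjoint_sdiff_self_right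
  have hunion : E ∪ F = E ∪ (F \ E) := (Set.union_diff_self).symm
  calc volume (E + ({0, 1} : Set ℝ)) = volume (E ∪ (F \ E)) := by rw [hEF, hunion]
    _ = volume E + volume (F \ E) := measure_union hdisjEF (hFmeas.diff hEmeas)
    _ ≥ volume E + volume ((fun x : ℝ => (x : UnitAddCircle)) '' E) := by
        gcongr
        exact le_trans (measure_mono hsub) (vol_image_le _ (hFmeas.diff hEmeas))
end

section
/- Let A ⊆ ℝ≥0 be a closed bounded set of nonzero Lebesgue measure and let K_A = sup{k ∈ ℕ : Ã_k ≠ ∅}. Then for every integer k with 1 ≤ k ≤ K_A, λ({x ∈ A : x mod 1 ∈ Ã_k}) = k·μ(Ã_k) + Σ_{l=k+1}^{K_A} μ(Ã_l). -/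
open MeasureTheory Set Pointwise
open scoped ENNReal

/-- For `1 ≤ k ≤ K_A`,
`λ({x ∈ A : x mod 1 ∈ Ã_k}) = k·μ(Ã_k) + Σ_{l=k+1}^{K_A} μ(Ã_l)`. -/
theorem measure_preimage_tilde (A : Set ℝ)
    (hAcl : IsClosed A) (hAbd : Bornology.IsBounded A)
    (hA0 : volume A ≠ 0) (hApos : A ⊆ {x : ℝ | 0 ≤ x})
    (k : ℕ) (hk1 : 1 ≤ k) (hk2 : k ≤ KE A) :
    volume {x ∈ A | Int.fract x ∈ tildeSet A k}
      = (k : ℝ≥0∞) * volume (tildeSet A k)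
        + ∑ l ∈ Finset.Icc (k + 1) (KE A), volume (tildeSet A l) := by
  classical
  have hAm : MeasurableSet A := hAcl.measurableSet
  -- a natural number bound for A
  obtain ⟨C, hC⟩ := isBounded_iff_forall_norm_le.1 hAbd
  set M : ℕ := ⌈C⌉₊ + 1 with hMdef
  have hMA : ∀ a ∈ A, a < (M : ℝ) := by
    intro a ha
    have h1 : a ≤ C := (abs_le.1 (by simpa using hC a ha)).2
    have h2 : C ≤ (⌈C⌉₊ : ℝ) := Nat.le_ceil C
    have : ((⌈C⌉₊ : ℝ)) < (M : ℝ) := by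
      rw [hMdef]; push_cast; linarith
    linarith
  -- counting finset
  set F : ℝ → Finset ℕ := fun x => (Finset.range M).filter (fun n => (n : ℝ) + x ∈ A)
    with hFdef
  have hS : ∀ x ∈ Set.Ico (0 : ℝ) 1, {n : ℕ | (n : ℝ) + x ∈ A} = ↑(F x) := by
    intro x hx
    ext n
    simp only [hFdef, Finset.coe_filter, Finset.mem_range, Set.mem_setOf_eq]
    constructor
    · intro hn
      refine ⟨?_, hn⟩
      have h1 : (n : ℝ) ≤ (n : ℝ) + x := le_add_of_nonneg_right hx.1
      have h2 : (n : ℝ) + x < (M : ℝ) := hMA _ hn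
      exact_mod_cast h1.trans_lt h2
    · exact fun hn => hn.2
  have hmem : ∀ (l : ℕ) (x : ℝ),
      x ∈ tildeSet A l ↔ x ∈ Set.Ico (0 : ℝ) 1 ∧ l ≤ (F x).card := by
    intro l x
    constructor
    · rintro ⟨hx, hl⟩
      exact ⟨hx, by rwa [hS x hx, Set.ncard_coe_finset] at hl⟩
    · rintro ⟨hx, hl⟩
      exact ⟨hx, by rwa [hS x hx, Set.ncard_coe_finset]⟩
  -- measurability
  have hpre : ∀ n : ℕ, MeasurableSet {x : ℝ | (n : ℝ) + x ∈ A} := fun n =>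
    hAm.preimage (measurable_const_add _)
  have htm : ∀ l, MeasurableSet (tildeSet A l) := by
    intro l
    have heq : tildeSet A l = Set.Ico (0 : ℝ) 1 ∩
        ⋃ s ∈ ((Finset.range M).powerset.filter (fun s => s.card = l)),
          ⋂ n ∈ s, {x : ℝ | (n : ℝ) + x ∈ A} := by
      ext x
      simp only [Set.mem_inter_iff, Set.mem_iUnion, Finset.mem_filter,
        Finset.mem_powerset, Set.mem_setOf_eq, exists_prop]
      rw [hmem l x]
      constructor
      · rintro ⟨hx, hl⟩
        obtain ⟨t, hts, htc⟩ := Finset.exists_subset_card_eq hl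
        refine ⟨hx, t, ⟨hts.trans (Finset.filter_subset _ _), htc⟩, ?_⟩
        simp only [Set.mem_iInter]
        exact fun n hn => (Finset.mem_filter.1 (hts hn)).2
      · rintro ⟨hx, t, ⟨hts, htc⟩, ht⟩
        refine ⟨hx, ?_⟩
        rw [← htc]
        apply Finset.card_le_card
        intro n hn
        simp only [Set.mem_iInter] at ht
        exact Finset.mem_filter.2 ⟨hts hn, ht n hn⟩
    rw [heq]
    refine measurableSet_Ico.inter ?_
    refine MeasurableSet.biUnion (Finset.countable_toSet _) fun s _ => ?_
    exact MeasurableSet.biInter (Finset.countable_toSet _) fun n _ => hpre n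
  -- monotonicity
  have hmono : ∀ {l m : ℕ}, l ≤ m → tildeSet A m ⊆ tildeSet A l := by
    intro l m h x hx
    rw [hmem] at hx ⊢
    exact ⟨hx.1, h.trans hx.2⟩
  -- bounds on KE
  have hboundM : ∀ l : ℕ, tildeSet A l ≠ ∅ → l ≤ M := by
    intro l hl
    obtain ⟨x, hx⟩ := Set.nonempty_iff_ne_empty.2 hl
    rw [hmem] at hx
    exact hx.2.trans ((Finset.card_filter_le _ _).trans (by simp))
  have hbdd : BddAbove {k : ℕ | tildeSet A k ≠ ∅} := ⟨M, fun l hl => hboundM l hl⟩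
  have hempty : ∀ l : ℕ, KE A < l → tildeSet A l = ∅ := by
    intro l hl
    by_contra h
    exact absurd (le_csSup hbdd h) (not_le.2 hl)
  have hKnonempty : {k : ℕ | tildeSet A k ≠ ∅}.Nonempty := by
    refine ⟨0, ?_⟩
    have : (0 : ℝ) ∈ tildeSet A 0 :=
      ⟨⟨le_refl _, zero_lt_one⟩, Nat.zero_le _⟩
    exact Set.nonempty_iff_ne_empty.1 ⟨0, this⟩
  have hKM : KE A ≤ M := hboundM _ (Nat.sSup_mem hKnonempty hbdd)
  -- the pieces B n
  set B : ℕ → Set ℝ := fun n => tildeSet A k ∩ {y : ℝ | (n : ℝ) + y ∈ A} with hBdef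
  have hBm : ∀ n, MeasurableSet (B n) := fun n => (htm k).inter (hpre n)
  -- LHS decomposition
  set U : ℕ → Set ℝ := fun n => (fun x : ℝ => x - (n : ℝ)) ⁻¹' B n with hUdef
  have hUsub : ∀ n : ℕ, U n ⊆ Set.Ico (n : ℝ) ((n : ℝ) + 1) := by
    intro n x hx
    have h1 : x - (n : ℝ) ∈ Set.Ico (0 : ℝ) 1 := hx.1.1
    constructor <;> [linarith [h1.1]; linarith [h1.2]]
  have hLHSeq : {x ∈ A | Int.fract x ∈ tildeSet A k} = ⋃ n ∈ Finset.range M, U n := by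
    ext x
    simp only [Set.mem_setOf_eq, Set.mem_iUnion, Finset.mem_range, exists_prop]
    constructor
    · rintro ⟨hxA, hxf⟩
      have hx0 : (0 : ℝ) ≤ x := hApos hxA
      set n : ℕ := ⌊x⌋.toNat with hn
      have hfl : (0 : ℤ) ≤ ⌊x⌋ := Int.floor_nonneg.2 hx0
      have hcast : (n : ℝ) = (⌊x⌋ : ℝ) := by
        rw [hn]; exact_mod_cast Int.toNat_of_nonneg hfl
      have hfr : Int.fract x = x - (n : ℝ) := by
        rw [Int.fract, hcast]
      refine ⟨n, ?_, ?_, ?_⟩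
      · have h1 : (n : ℝ) ≤ x := by rw [hcast]; exact Int.floor_le x
        have h2 : x < (M : ℝ) := hMA x hxA
        exact_mod_cast h1.trans_lt h2
      · show x - (n : ℝ) ∈ tildeSet A k
        rw [← hfr]; exact hxf
      · show (n : ℝ) + (x - (n : ℝ)) ∈ A
        simpa using hxA
    · rintro ⟨n, hnM, hx⟩
      have hxA : x ∈ A := by
        have := hx.2
        simpa using this
      refine ⟨hxA, ?_⟩
      have h1 : x - (n : ℝ) ∈ Set.Ico (0 : ℝ) 1 := hx.1.1
      have hfr : Int.fract x = x - (n : ℝ) := by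
        have : Int.fract ((x - (n : ℝ)) + (n : ℕ)) = Int.fract (x - (n : ℝ)) :=
          Int.fract_add_natCast _ _
        rw [sub_add_cancel] at this
        rw [this, Int.fract_eq_self.2 ⟨h1.1, h1.2⟩]
      rw [hfr]
      exact hx.1
  have hUvol : ∀ n : ℕ, volume (U n) = volume (B n) := by
    intro n
    have : U n = (fun x : ℝ => x + (-(n : ℝ))) ⁻¹' B n := by
      rw [hUdef]; ext x; simp [sub_eq_add_neg]
    rw [this, measure_preimage_add_right]
  have hUm : ∀ n : ℕ, MeasurableSet (U n) := fun n =>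
    (hBm n).preimage (measurable_sub_const _)
  have hLHS : volume {x ∈ A | Int.fract x ∈ tildeSet A k}
      = ∑ n ∈ Finset.range M, volume (B n) := by
    rw [hLHSeq, measure_biUnion_finset ?_ (fun n _ => hUm n)]
    · exact Finset.sum_congr rfl fun n _ => hUvol n
    · intro i _ j _ hij
      refine Set.disjoint_left.2 fun x hxi hxj => hij ?_
      have h1 := hUsub i hxi
      have h2 := hUsub j hxj
      have : (i : ℝ) < (j : ℝ) + 1 := lt_of_le_of_lt h1.1 h2.2
      have : (j : ℝ) < (i : ℝ) + 1 := lt_of_le_of_lt h2.1 h1.2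
      have hij1 : i ≤ j := by exact_mod_cast Nat.lt_succ_iff.1 (by exact_mod_cast ‹(i : ℝ) < (j : ℝ) + 1›)
      have hij2 : j ≤ i := by exact_mod_cast Nat.lt_succ_iff.1 (by exact_mod_cast ‹(j : ℝ) < (i : ℝ) + 1›)
      exact le_antisymm hij1 hij2
  -- core counting identity
  have hcore : ∑ n ∈ Finset.range M, volume (B n)
      = ∑ l ∈ Finset.Icc 1 M, volume (tildeSet A k ∩ tildeSet A l) := by
    have hIm : ∀ l, MeasurableSet (tildeSet A k ∩ tildeSet A l) := fun l =>
      (htm k).inter (htm l)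
    calc ∑ n ∈ Finset.range M, volume (B n)
        = ∑ n ∈ Finset.range M, ∫⁻ x, (B n).indicator 1 x :=
          Finset.sum_congr rfl fun n _ => (lintegral_indicator_one (hBm n)).symm
      _ = ∫⁻ x, ∑ n ∈ Finset.range M, (B n).indicator 1 x :=
          (lintegral_finset_sum _ fun n _ => measurable_const.indicator (hBm n)).symm
      _ = ∫⁻ x, ∑ l ∈ Finset.Icc 1 M, (tildeSet A k ∩ tildeSet A l).indicator 1 x := by
          congr 1
          funext x
          by_cases hx : x ∈ tildeSet A k
          · have hx1 : x ∈ Set.Ico (0 : ℝ) 1 := ((hmem k x).1 hx).1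
            have hcM : (F x).card ≤ M := (Finset.card_filter_le _ _).trans (by simp)
            have hL : ∑ n ∈ Finset.range M, (B n).indicator 1 x
                = ((F x).card : ℝ≥0∞) := by
              have : ∀ n : ℕ, (B n).indicator (1 : ℝ → ℝ≥0∞) x
                  = if (n : ℝ) + x ∈ A then 1 else 0 := by
                intro n
                rw [Set.indicator_apply]
                by_cases h : (n : ℝ) + x ∈ A
                · simp [h, hBdef, hx]
                · simp [h, hBdef]
              rw [Finset.sum_congr rfl fun n _ => this n, Finset.sum_boole]
            have hR : ∑ l ∈ Finset.Icc 1 M, (tildeSet A k ∩ tildeSet A l).indicator 1 x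
                = ((F x).card : ℝ≥0∞) := by
              have h1 : ∀ l : ℕ, (tildeSet A k ∩ tildeSet A l).indicator (1 : ℝ → ℝ≥0∞) x
                  = if l ≤ (F x).card then 1 else 0 := by
                intro l
                rw [Set.indicator_apply]
                by_cases h : l ≤ (F x).card
                · simp only [h, if_true]
                  rw [if_pos ⟨hx, (hmem l x).2 ⟨hx1, h⟩⟩]
                  rfl
                · simp only [h, if_false]
                  rw [if_neg]
                  rintro ⟨-, hxl⟩
                  exact h ((hmem l x).1 hxl).2
              rw [Finset.sum_congr rfl fun l _ => h1 l, Finset.sum_boole]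
              have hfe : (Finset.Icc 1 M).filter (fun l => l ≤ (F x).card)
                  = Finset.Icc 1 (F x).card := by
                ext l
                simp only [Finset.mem_filter, Finset.mem_Icc]
                constructor
                · rintro ⟨⟨h1l, -⟩, h2l⟩; exact ⟨h1l, h2l⟩
                · rintro ⟨h1l, h2l⟩; exact ⟨⟨h1l, h2l.trans hcM⟩, h2l⟩
              rw [hfe]
              norm_cast
              rw [Nat.card_Icc]
              omega
            rw [hL, hR]
          · have hL : ∀ n : ℕ, (B n).indicator (1 : ℝ → ℝ≥0∞) x = 0 := by
              intro n
              rw [Set.indicator_apply, if_neg]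
              exact fun h => hx h.1
            have hR : ∀ l : ℕ, (tildeSet A k ∩ tildeSet A l).indicator (1 : ℝ → ℝ≥0∞) x = 0 := by
              intro l
              rw [Set.indicator_apply, if_neg]
              exact fun h => hx h.1
            simp only [hL, hR, Finset.sum_const_zero]
      _ = ∑ l ∈ Finset.Icc 1 M, ∫⁻ x, (tildeSet A k ∩ tildeSet A l).indicator 1 x :=
          lintegral_finset_sum _ fun l _ => measurable_const.indicator (hIm l)
      _ = ∑ l ∈ Finset.Icc 1 M, volume (tildeSet A k ∩ tildeSet A l) :=
          Finset.sum_congr rfl fun l _ => lintegral_indicator_one (hIm l)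
  -- final arithmetic
  have hkM : k ≤ M := hk2.trans hKM
  have hfinal : ∑ l ∈ Finset.Icc 1 M, volume (tildeSet A k ∩ tildeSet A l)
      = (k : ℝ≥0∞) * volume (tildeSet A k)
        + ∑ l ∈ Finset.Icc (k + 1) (KE A), volume (tildeSet A l) := by
    have hsplit : ∑ l ∈ Finset.Ioc 0 k, volume (tildeSet A k ∩ tildeSet A l)
        + ∑ l ∈ Finset.Ioc k M, volume (tildeSet A k ∩ tildeSet A l)
        = ∑ l ∈ Finset.Ioc 0 M, volume (tildeSet A k ∩ tildeSet A l) :=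
      Finset.sum_Ioc_consecutive _ (Nat.zero_le k) hkM
    rw [show Finset.Icc 1 M = Finset.Ioc 0 M from Finset.Icc_add_one_left_eq_Ioc 0 M, ← hsplit]
    have h1 : ∑ l ∈ Finset.Ioc 0 k, volume (tildeSet A k ∩ tildeSet A l)
        = (k : ℝ≥0∞) * volume (tildeSet A k) := by
      rw [Finset.sum_congr rfl (fun l hl => ?_), Finset.sum_const, Nat.card_Ioc,
        Nat.sub_zero, nsmul_eq_mul]
      rw [Set.inter_eq_left.2 (hmono (Finset.mem_Ioc.1 hl).2)]
    have h2 : ∑ l ∈ Finset.Ioc k M, volume (tildeSet A k ∩ tildeSet A l)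
        = ∑ l ∈ Finset.Icc (k + 1) (KE A), volume (tildeSet A l) := by
      have hstep : ∀ l ∈ Finset.Ioc k M, volume (tildeSet A k ∩ tildeSet A l)
          = volume (tildeSet A l) := by
        intro l hl
        rw [Set.inter_eq_right.2 (hmono (Finset.mem_Ioc.1 hl).1.le)]
      rw [Finset.sum_congr rfl hstep]
      rw [← Finset.sum_Ioc_consecutive (fun l => volume (tildeSet A l)) hk2 hKM]
      have hz : ∑ l ∈ Finset.Ioc (KE A) M, volume (tildeSet A l) = 0 := by
        refine Finset.sum_eq_zero fun l hl => ?_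
        rw [hempty l (Finset.mem_Ioc.1 hl).1]
        exact measure_empty
      rw [hz, add_zero, Finset.Icc_add_one_left_eq_Ioc]
    rw [h1, h2]
  rw [hLHS, hcore, hfinal]
end
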